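/- Let i ∈ [1,n], j ∈ [1,i), k ∈ [j,i), and b = min{low(k+1,i), j}. If maxlow(i) ≤ k, then γ^0_{[1,2]}(j,i:k) = min{ γ^1_{[1,2]}(b,k:k), γ^1_{[1,2]}(b,k:k,l) : l ∈ [b,j) }; otherwise (if maxlow(i) > k), γ^0_{[1,2]}(j,i:k) = ∞ (i.e., is not defined). -/
import Mathlib


/-- `G` is a graph with vertex set `{1,…,n}` (all edges lie inside `{1,…,n}`),
whose adjacency satisfies the interval-graph numbering property: whenever
`i < j < k` and `i` is adjacent to `k`, then `j` is adjacent to `k`. -/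
def GoodNumbering (G : SimpleGraph ℕ) (n : ℕ) : Prop :=
  (∀ u v : ℕ, G.Adj u v → u ∈ Finset.Icc 1 n ∧ v ∈ Finset.Icc 1 n) ∧
  (∀ i j k : ℕ, i < j → j < k → G.Adj i k → G.Adj j k)

/-- `low a = min N[a]`, the minimum of the closed neighborhood of `a`. -/
noncomputable def low (G : SimpleGraph ℕ) (a : ℕ) : ℕ :=
  sInf {b : ℕ | b = a ∨ G.Adj a b}

/-- `lowI a b = min {low k : k ∈ [a,b]}`. -/
noncomputable def lowI (G : SimpleGraph ℕ) (a b : ℕ) : ℕ :=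
  sInf (low G '' Set.Icc a b)

/-- `maxlow a = max {low k : low a ≤ k ≤ a}`. -/
noncomputable def maxlow (G : SimpleGraph ℕ) (a : ℕ) : ℕ :=
  sSup (low G '' Set.Icc (low G a) a)

/-- `D` is a `[1,2]`-dominating set of the induced subgraph `G[1,i]`:
`D ⊆ [1,i]` and every vertex of `[1,i]` outside `D` has at least one and at
most two neighbors in `D`. -/
def Dom12 (G : SimpleGraph ℕ) (i : ℕ) (D : Finset ℕ) : Prop :=
  D ⊆ Finset.Icc 1 i ∧
  ∀ v ∈ Finset.Icc 1 i, v ∉ D →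
    1 ≤ {u ∈ (D : Set ℕ) | G.Adj v u}.ncard ∧ {u ∈ (D : Set ℕ) | G.Adj v u}.ncard ≤ 2

/-- The minimum (in `ℕ∞`, with `sInf ∅ = ⊤`) of the cardinalities of the
`[1,2]`-dominating sets `D` of `G[1,i]` satisfying the extra property `P`. -/
noncomputable def gval (G : SimpleGraph ℕ) (i : ℕ) (P : Finset ℕ → Prop) : ℕ∞ :=
  sInf {k : ℕ∞ | ∃ D : Finset ℕ, Dom12 G i D ∧ P D ∧ (D.card : ℕ∞) = k}

/-- `γ_{[1,2]}(i)`. -/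
noncomputable def g12 (G : SimpleGraph ℕ) (i : ℕ) : ℕ∞ :=
  gval G i fun _ => True

/-- `γ⁰_{[1,2]}(j,i)`: no vertex of `[j,i]` is in `D`. -/
noncomputable def g0I (G : SimpleGraph ℕ) (j i : ℕ) : ℕ∞ :=
  gval G i fun D => ∀ x ∈ Finset.Icc j i, x ∉ D

/-- `γ⁰_{[1,2]}(j,i:k)`: `k ∈ D` and no other vertex of `[j,i]` is in `D`. -/
noncomputable def g0Ik (G : SimpleGraph ℕ) (j i k : ℕ) : ℕ∞ :=
  gval G i fun D => k ∈ D ∧ ∀ x ∈ Finset.Icc j i, x ≠ k → x ∉ D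

/-- `γ¹_{[1,2]}(i)`: `i ∈ D`. -/
noncomputable def g1 (G : SimpleGraph ℕ) (i : ℕ) : ℕ∞ :=
  gval G i fun D => i ∈ D

/-- `γ¹_{[1,2]}(j,i:i)`: `i ∈ D` and no vertex of `[j,i)` is in `D`. -/
noncomputable def g1I (G : SimpleGraph ℕ) (j i : ℕ) : ℕ∞ :=
  gval G i fun D => i ∈ D ∧ ∀ x ∈ Finset.Ico j i, x ∉ D

/-- `γ¹_{[1,2]}(k,i:i,j)`: `i, j ∈ D` and no other vertex of `[k,i)` is in `D`. -/
noncomputable def g1Ij (G : SimpleGraph ℕ) (k i j : ℕ) : ℕ∞ :=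
  gval G i fun D => i ∈ D ∧ j ∈ D ∧ ∀ x ∈ Finset.Ico k i, x ≠ j → x ∉ D

/-- `γ¹_{[1,2]}(l,i:i,j,k)`: `i, j, k ∈ D` and no other vertex of `[l,i)` is in `D`. -/
noncomputable def g1Ijk (G : SimpleGraph ℕ) (l i j k : ℕ) : ℕ∞ :=
  gval G i fun D => i ∈ D ∧ j ∈ D ∧ k ∈ D ∧ ∀ x ∈ Finset.Ico l i, x ≠ j → x ≠ k → x ∉ D

/-- `γ¹¹_{[1,2]}(l,i:i,j,k)`: `i, j ∈ D`, all of `[l,k] ⊆ D`, and no vertex of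
`(k,i)` other than `j` is in `D`. -/
noncomputable def g11Ijk (G : SimpleGraph ℕ) (l i j k : ℕ) : ℕ∞ :=
  gval G i fun D => i ∈ D ∧ j ∈ D ∧ (∀ x ∈ Finset.Icc l k, x ∈ D) ∧
    ∀ x ∈ Finset.Ioo k i, x ≠ j → x ∉ D

section helpers
variable {G : SimpleGraph ℕ} {n : ℕ}

lemma low_le_self (G : SimpleGraph ℕ) (a : ℕ) : low G a ≤ a :=
  Nat.sInf_le (Or.inl rfl)

lemma low_spec (G : SimpleGraph ℕ) (a : ℕ) : low G a = a ∨ G.Adj a (low G a) :=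
  Nat.sInf_mem (⟨a, Or.inl rfl⟩ : Set.Nonempty {b : ℕ | b = a ∨ G.Adj a b})

lemma adj_low {a : ℕ} (h : low G a < a) : G.Adj a (low G a) :=
  (low_spec G a).resolve_left (by omega)

lemma low_le_of_adj {a u : ℕ} (h : G.Adj a u) : low G a ≤ u :=
  Nat.sInf_le (Or.inr h)

lemma adj_of_between (hG : GoodNumbering G n) {a m : ℕ} (h1 : low G a ≤ m) (h2 : m < a) :
    G.Adj a m := by
  rcases eq_or_lt_of_le h1 with h | h
  · exact h ▸ adj_low (h ▸ h2)
  · exact ((hG.2 (low G a) m a h h2 (adj_low (lt_trans h h2)).symm)).symm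

lemma one_le_low (hG : GoodNumbering G n) {a : ℕ} (ha : 1 ≤ a) : 1 ≤ low G a := by
  rcases low_spec G a with h | h
  · omega
  · exact (Finset.mem_Icc.mp (hG.1 a (low G a) h).2).1

lemma low_le_maxlow {i v : ℕ} (hv : v ∈ Set.Icc (low G i) i) : low G v ≤ maxlow G i :=
  le_csSup (((Set.finite_Icc _ _).image _).bddAbove) ⟨v, hv, rfl⟩

lemma low_self_le_maxlow (G : SimpleGraph ℕ) (i : ℕ) : low G i ≤ maxlow G i :=
  low_le_maxlow ⟨low_le_self G i, le_refl i⟩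

lemma transfer_up (hG : GoodNumbering G n) {i j k b l : ℕ}
    (hji : j < i) (hjk : j ≤ k) (hki : k < i)
    (hb : b = min (lowI G (k + 1) i) j)
    (hml : maxlow G i ≤ k)
    {D : Finset ℕ} (hdom : Dom12 G k D) (hkD : k ∈ D)
    (hD1 : ∀ x, b ≤ x → x < k → x ∈ D → (x < j ∧ x = l)) :
    Dom12 G i D ∧ (k ∈ D ∧ ∀ x ∈ Finset.Icc j i, x ≠ k → x ∉ D) := by
  have hDk : D ⊆ Finset.Icc 1 k := hdom.1
  have key : ∀ v, k < v → v ≤ i → low G v ≤ k ∧ b ≤ low G v := by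
    intro v hkv hvi
    constructor
    · exact le_trans (low_le_maxlow ⟨by
        have := low_self_le_maxlow G i; omega, hvi⟩) hml
    · have h1 : lowI G (k + 1) i ≤ low G v :=
        Nat.sInf_le ⟨v, Set.mem_Icc.mpr ⟨by omega, hvi⟩, rfl⟩
      omega
  refine ⟨⟨fun x hx => ?_, ?_⟩, hkD, ?_⟩
  · have := Finset.mem_Icc.mp (hDk hx); exact Finset.mem_Icc.mpr ⟨this.1, by omega⟩
  · intro v hv hvD
    rw [Finset.mem_Icc] at hv
    by_cases hvk : v ≤ k
    · exact hdom.2 v (Finset.mem_Icc.mpr ⟨hv.1, hvk⟩) hvD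
    · push_neg at hvk
      obtain ⟨hlvk, hblv⟩ := key v hvk hv.2
      set S := {u ∈ (D : Set ℕ) | G.Adj v u} with hS
      have hSfin : S.Finite := D.finite_toSet.subset (fun u hu => hu.1)
      have hkS : k ∈ S := ⟨hkD, adj_of_between hG hlvk hvk⟩
      have hsub : S ⊆ {k, l} := by
        rintro u ⟨huD, hadj⟩
        have huk : u ≤ k := (Finset.mem_Icc.mp (hDk huD)).2
        rcases eq_or_lt_of_le huk with h | h
        · exact Or.inl h
        · have h1 : low G v ≤ u := low_le_of_adj hadj
          exact Or.inr (hD1 u (by omega) h huD).2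
      constructor
      · exact (Set.ncard_pos hSfin).mpr ⟨k, hkS⟩
      · calc S.ncard ≤ ({k, l} : Set ℕ).ncard :=
              Set.ncard_le_ncard hsub ((Set.finite_singleton l).insert k)
          _ ≤ ({l} : Set ℕ).ncard + 1 := Set.ncard_insert_le k {l}
          _ ≤ 2 := by rw [Set.ncard_singleton]
  · intro x hx hxk hxD
    rw [Finset.mem_Icc] at hx
    have hxk' : x ≤ k := (Finset.mem_Icc.mp (hDk hxD)).2
    have := hD1 x (by omega) (by omega) hxD
    omega

lemma transfer_down (hG : GoodNumbering G n) {i j k b : ℕ}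
    (hjk : j ≤ k) (hki : k < i)
    (hb : b = min (lowI G (k + 1) i) j)
    {D : Finset ℕ} (hdom : Dom12 G i D) (hkD : k ∈ D)
    (hPA : ∀ x ∈ Finset.Icc j i, x ≠ k → x ∉ D) :
    Dom12 G k D ∧ ∀ l1 ∈ D, ∀ l2 ∈ D, b ≤ l1 → l1 < j → b ≤ l2 → l2 < j → l1 = l2 := by
  have hsub : D ⊆ Finset.Icc 1 k := by
    intro x hx
    have hx' := Finset.mem_Icc.mp (hdom.1 hx)
    rcases le_or_gt x k with h | h
    · exact Finset.mem_Icc.mpr ⟨hx'.1, h⟩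
    · exact absurd hx (hPA x (Finset.mem_Icc.mpr ⟨by omega, hx'.2⟩) (by omega))
  refine ⟨⟨hsub, fun v hv hvD => hdom.2 v (by
      rw [Finset.mem_Icc] at hv ⊢; omega) hvD⟩, ?_⟩
  intro l1 hl1D l2 hl2D hbl1 hl1j hbl2 hl2j
  by_contra hne
  have hbj : b < j := by omega
  have hbl : b = lowI G (k + 1) i := by omega
  obtain ⟨t, ht, hlt⟩ : ∃ t ∈ Set.Icc (k + 1) i, low G t = b := by
    have hne' : (low G '' Set.Icc (k + 1) i).Nonempty :=
      ⟨low G i, ⟨i, ⟨by omega, le_refl i⟩, rfl⟩⟩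
    obtain ⟨t, ht, hlt⟩ := Nat.sInf_mem hne'
    refine ⟨t, ht, ?_⟩
    rw [hbl, lowI]
    exact hlt
  rw [Set.mem_Icc] at ht
  have htD : t ∉ D := hPA t (Finset.mem_Icc.mpr ⟨by omega, ht.2⟩) (by omega)
  have hcond := (hdom.2 t (Finset.mem_Icc.mpr ⟨by omega, ht.2⟩) htD).2
  set S := {u ∈ (D : Set ℕ) | G.Adj t u} with hS
  have hSfin : S.Finite := D.finite_toSet.subset (fun u hu => hu.1)
  have hsub3 : ({l1, l2, k} : Set ℕ) ⊆ S := by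
    rintro u (rfl | rfl | rfl)
    · exact ⟨hl1D, adj_of_between hG (by omega) (by omega)⟩
    · exact ⟨hl2D, adj_of_between hG (by omega) (by omega)⟩
    · exact ⟨hkD, adj_of_between hG (by omega) (by omega)⟩
  have h3 : ({l1, l2, k} : Set ℕ).ncard = 3 := by
    rw [Set.ncard_insert_of_notMem (by simp; omega)
        ((Set.finite_singleton k).insert l2),
      Set.ncard_insert_of_notMem (by simp; omega) (Set.finite_singleton k),
      Set.ncard_singleton]
  have := Set.ncard_le_ncard hsub3 hSfin
  omega

lemma no_dom (hG : GoodNumbering G n) {i j k : ℕ} (hi1 : 1 ≤ i)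
    (hjk : j ≤ k) (hki : k < i) (hml : k < maxlow G i)
    {D : Finset ℕ} (hdom : Dom12 G i D) (hkD : k ∈ D)
    (hPA : ∀ x ∈ Finset.Icc j i, x ≠ k → x ∉ D) : False := by
  obtain ⟨t, ht, hlt⟩ : ∃ t ∈ Set.Icc (low G i) i, low G t = maxlow G i := by
    have := Set.Nonempty.csSup_mem
      (⟨low G i, ⟨i, ⟨low_le_self G i, le_refl i⟩, rfl⟩⟩ :
        (low G '' Set.Icc (low G i) i).Nonempty)
      ((Set.finite_Icc _ _).image _)
    obtain ⟨t, ht, hlt⟩ := this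
    exact ⟨t, ht, hlt⟩
  rw [Set.mem_Icc] at ht
  have hkt : k < t := by have := low_le_self G t; omega
  have htD : t ∉ D := hPA t (Finset.mem_Icc.mpr ⟨by omega, ht.2⟩) (by omega)
  have h1t : 1 ≤ t := le_trans (one_le_low hG hi1) ht.1
  have hcond := (hdom.2 t (Finset.mem_Icc.mpr ⟨h1t, ht.2⟩) htD).1
  have hpos : {u ∈ (D : Set ℕ) | G.Adj t u}.ncard ≠ 0 := by omega
  obtain ⟨u, huD, hadj⟩ := Set.nonempty_of_ncard_ne_zero hpos
  have hlu : low G t ≤ u := low_le_of_adj hadj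
  have hui : u ≤ i := (Finset.mem_Icc.mp (hdom.1 huD)).2
  exact hPA u (Finset.mem_Icc.mpr ⟨by omega, hui⟩) (by omega) huD

end helpers

/-- Recurrence for `γ⁰_{[1,2]}(j,i:k)`, with `b = min (low(k+1,i)) j`. -/
theorem g0Ik_recurrence (G : SimpleGraph ℕ) (n : ℕ) (hn : 1 ≤ n)
    (hG : GoodNumbering G n) (i j k b : ℕ)
    (hi : i ∈ Finset.Icc 1 n) (hj : j ∈ Finset.Ico 1 i) (hk : k ∈ Finset.Ico j i)
    (hb : b = min (lowI G (k + 1) i) j) :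
    (maxlow G i ≤ k →
      g0Ik G j i k =
        sInf {v : ℕ∞ | v = g1I G b k ∨ ∃ l ∈ Finset.Ico b j, v = g1Ij G b k l}) ∧
    (k < maxlow G i → g0Ik G j i k = ⊤) := by
  rw [Finset.mem_Icc] at hi
  rw [Finset.mem_Ico] at hj hk
  constructor
  · intro hml
    unfold g0Ik gval
    apply le_antisymm
    · apply le_sInf
      rintro v (rfl | ⟨l, hl, rfl⟩)
      · unfold g1I gval
        apply sInf_le_sInf
        rintro w ⟨D, hdom, ⟨hkD, hcond⟩, rfl⟩
        obtain ⟨h1, h2⟩ := transfer_up (l := 0) hG hj.2 hk.1 hk.2 hb hml hdom hkD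
          (fun x hx1 hx2 hx => absurd hx (hcond x (Finset.mem_Ico.mpr ⟨hx1, hx2⟩)))
        exact ⟨D, h1, h2, rfl⟩
      · rw [Finset.mem_Ico] at hl
        unfold g1Ij gval
        apply sInf_le_sInf
        rintro w ⟨D, hdom, ⟨hkD, hlD, hcond⟩, rfl⟩
        have hD1 : ∀ x, b ≤ x → x < k → x ∈ D → (x < j ∧ x = l) := by
          intro x hx1 hx2 hxD
          by_cases hxl : x = l
          · exact ⟨by omega, hxl⟩
          · exact absurd hxD (hcond x (Finset.mem_Ico.mpr ⟨hx1, hx2⟩) hxl)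
        obtain ⟨h1, h2⟩ := transfer_up (l := l) hG hj.2 hk.1 hk.2 hb hml hdom hkD hD1
        exact ⟨D, h1, h2, rfl⟩
    · apply le_sInf
      rintro v ⟨D, hdom, ⟨hkD, hPA⟩, rfl⟩
      obtain ⟨hdomk, huniq⟩ := transfer_down hG hk.1 hk.2 hb hdom hkD hPA
      by_cases hex : ∃ l ∈ D, b ≤ l ∧ l < j
      · obtain ⟨l, hlD, hbl, hlj⟩ := hex
        refine le_trans (sInf_le (Or.inr ⟨l, Finset.mem_Ico.mpr ⟨hbl, hlj⟩, rfl⟩)) ?_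
        unfold g1Ij gval
        apply sInf_le
        refine ⟨D, hdomk, ⟨hkD, hlD, ?_⟩, rfl⟩
        intro x hx hxl hxD
        rw [Finset.mem_Ico] at hx
        by_cases hxj : x < j
        · exact hxl (huniq x hxD l hlD hx.1 hxj hbl hlj)
        · exact hPA x (Finset.mem_Icc.mpr ⟨by omega, by omega⟩) (by omega) hxD
      · refine le_trans (sInf_le (Or.inl rfl)) ?_
        unfold g1I gval
        apply sInf_le
        refine ⟨D, hdomk, ⟨hkD, ?_⟩, rfl⟩
        intro x hx hxD
        rw [Finset.mem_Ico] at hx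
        by_cases hxj : x < j
        · exact hex ⟨x, hxD, hx.1, hxj⟩
        · exact hPA x (Finset.mem_Icc.mpr ⟨by omega, by omega⟩) (by omega) hxD
  · intro hml
    unfold g0Ik gval
    rw [sInf_eq_top]
    rintro v ⟨D, hdom, ⟨hkD, hPA⟩, rfl⟩
    exact (no_dom hG hi.1 hk.1 hk.2 hml hdom hkD hPA).elim
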